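/- Let r > 0, h > 0, τ ∈ ℕ, p ∈ [0,1), and S a nonnegative integrable random variable with E[S] defined. For b > 0, define C(b) = r·μ - h·E[(s(b) - S)⁺] - b·E[(S - s(b))⁺], where μ > 0 is a constant and s(b) = inf{y : P[S ≥ y] ≤ h/(h+b)}. Suppose E[e^{γS}] < ∞ for some γ > 0. Then with b₁(r) = r + τh and b₂(r) = (1-p)r/(2(1+τ)), the ratio C(b₁(r)) / C(b₂(r)) → 1 as r → ∞. -/

import Mathlib

open MeasureTheory Filter

set_option maxHeartbeats 2000000

/-- Asymptotic profit-ratio convergence for the backlogging system under its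
optimal base-stock policy: with backorder costs `b₁(r) = r + τh` and
`b₂(r) = (1-p) r / (2(1+τ))`, base-stock levels
`s(b) = inf{y : P[S ≥ y] ≤ h/(h+b)}` and profit
`C(r, b) = r μd - h E[(s(b) - S)⁺] - b E[(S - s(b))⁺]`, the ratio
`C(r, b₁(r)) / C(r, b₂(r)) → 1` as `r → ∞`. -/
theorem profit_ratio_tendsto_one {Ω : Type*} [MeasurableSpace Ω]
    (μ : Measure Ω) [IsProbabilityMeasure μ]
    (S : Ω → ℝ) (hSmeas : Measurable S) (hSnn : ∀ ω, 0 ≤ S ω)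
    (hSint : Integrable S μ)
    (γ : ℝ) (hγ : 0 < γ)
    (hexp : Integrable (fun ω => Real.exp (γ * S ω)) μ)
    (h : ℝ) (hh : 0 < h) (τ : ℕ) (p : ℝ) (hp0 : 0 ≤ p) (hp1 : p < 1)
    (μd : ℝ) (hμd : 0 < μd)
    (s : ℝ → ℝ)
    (hs : ∀ b : ℝ, s b = sInf {y : ℝ | (μ {ω | y ≤ S ω}).toReal ≤ h / (h + b)})
    (C : ℝ → ℝ → ℝ)
    (hC : ∀ r b : ℝ, C r b =
      r * μd - h * ∫ ω, max (s b - S ω) 0 ∂μ - b * ∫ ω, max (S ω - s b) 0 ∂μ) :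
    Tendsto (fun r : ℝ =>
        C r (r + τ * h) / C r ((1 - p) * r / (2 * (1 + τ)))) atTop (nhds 1) := by
  classical
  set M := ∫ ω, Real.exp (γ * S ω) ∂μ with hMdef
  have hM1 : (1:ℝ) ≤ M := by
    have hpt : ∀ ω, (1:ℝ) ≤ Real.exp (γ * S ω) := fun ω =>
      Real.one_le_exp (by have := hSnn ω; positivity)
    calc (1:ℝ) = ∫ _ω, (1:ℝ) ∂μ := by simp
    _ ≤ M := integral_mono (integrable_const 1) hexp hpt
  have hM0 : (0:ℝ) < M := lt_of_lt_of_le one_pos hM1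
  set Y : ℝ → ℝ := fun b => Real.log (M * (h + b) / h) / γ with hYdef
  have hYb : ∀ b, Y b = Real.log (M * (h + b) / h) / γ := fun b => rfl
  -- Markov / Chernoff bound on the tail
  have markov : ∀ y : ℝ, (μ {ω | y ≤ S ω}).toReal ≤ Real.exp (-(γ * y)) * M := by
    intro y
    have hsub : {ω | y ≤ S ω} ⊆ {ω | Real.exp (γ * y) ≤ Real.exp (γ * S ω)} := by
      intro ω hω
      exact Real.exp_le_exp.mpr (mul_le_mul_of_nonneg_left hω hγ.le)
    have h1 : (μ {ω | y ≤ S ω}).toReal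
        ≤ (μ {ω | Real.exp (γ * y) ≤ Real.exp (γ * S ω)}).toReal :=
      ENNReal.toReal_mono (measure_ne_top _ _) (measure_mono hsub)
    have h2 := mul_meas_ge_le_integral_of_nonneg
      (Filter.Eventually.of_forall fun (ω : Ω) => (Real.exp_pos (γ * S ω)).le) hexp
      (Real.exp (γ * y))
    have h3 : (μ {ω | Real.exp (γ * y) ≤ Real.exp (γ * S ω)}).toReal
        ≤ M / Real.exp (γ * y) := by
      rw [le_div_iff₀ (Real.exp_pos _)]
      calc (μ {ω | Real.exp (γ * y) ≤ Real.exp (γ * S ω)}).toReal * Real.exp (γ * y)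
          = Real.exp (γ * y) * (μ {ω | Real.exp (γ * y) ≤ Real.exp (γ * S ω)}).toReal := by ring
      _ ≤ M := h2
    calc (μ {ω | y ≤ S ω}).toReal ≤ M / Real.exp (γ * y) := le_trans h1 h3
    _ = Real.exp (-(γ * y)) * M := by rw [Real.exp_neg]; field_simp
  -- main per-b bound
  have key : ∀ r b : ℝ, 1 ≤ b →
      r * μd - (2 * h * Y b + (1 + h + h / γ)) ≤ C r b ∧ C r b ≤ r * μd := by
    intro r b hb1
    have hb0 : (0:ℝ) < b := lt_of_lt_of_le one_pos hb1
    have hhb : (0:ℝ) < h + b := by linarith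
    have hexpY : Real.exp (-(γ * Y b)) * M = h / (h + b) := by
      have harg : (0:ℝ) < M * (h + b) / h := by positivity
      have h1 : γ * Y b = Real.log (M * (h + b) / h) := by
        rw [hYb]; field_simp
      rw [h1, Real.exp_neg, Real.exp_log harg]
      field_simp
    have hYA : (μ {ω | Y b ≤ S ω}).toReal ≤ h / (h + b) := by
      calc (μ {ω | Y b ≤ S ω}).toReal ≤ Real.exp (-(γ * Y b)) * M := markov (Y b)
      _ = h / (h + b) := hexpY
    set A : Set ℝ := {y : ℝ | (μ {ω | y ≤ S ω}).toReal ≤ h / (h + b)} with hAdef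
    have hclt1 : h / (h + b) < 1 := (div_lt_one hhb).mpr (by linarith)
    have hApos : ∀ y ∈ A, 0 < y := by
      intro y hy
      by_contra hy0
      push_neg at hy0
      have huniv : {ω | y ≤ S ω} = Set.univ :=
        Set.eq_univ_of_forall fun ω => le_trans hy0 (hSnn ω)
      have : (μ {ω | y ≤ S ω}).toReal = 1 := by rw [huniv]; simp
      rw [hAdef] at hy
      simp only [Set.mem_setOf_eq] at hy
      rw [this] at hy
      linarith
    have hbdd : BddBelow A := ⟨0, fun y hy => (hApos y hy).le⟩
    have hAne : A.Nonempty := ⟨Y b, hYA⟩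
    have hs_eq : s b = sInf A := hs b
    have hs0 : 0 ≤ s b := by
      rw [hs_eq]; exact le_csInf hAne fun y hy => (hApos y hy).le
    have hsY : s b ≤ Y b := by rw [hs_eq]; exact csInf_le hbdd hYA
    have hY0 : 0 ≤ Y b := le_trans hs0 hsY
    have hinvb : (0:ℝ) < 1 / b := by positivity
    have tail_eps : (μ {ω | s b + 1 / b ≤ S ω}).toReal ≤ h / (h + b) := by
      obtain ⟨y, hyA, hylt⟩ := exists_lt_of_csInf_lt hAne
        (show sInf A < s b + 1 / b by rw [← hs_eq]; linarith)
      have hmono : {ω | s b + 1 / b ≤ S ω} ⊆ {ω | y ≤ S ω} :=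
        fun ω hω => le_trans hylt.le hω
      exact le_trans (ENNReal.toReal_mono (measure_ne_top _ _) (measure_mono hmono)) hyA
    -- integral bounds
    have int1 : Integrable (fun ω => max (s b - S ω) 0) μ :=
      ((integrable_const (s b)).sub hSint).pos_part
    have int2 : Integrable (fun ω => max (S ω - s b) 0) μ :=
      (hSint.sub (integrable_const (s b))).pos_part
    have hI1nn : 0 ≤ ∫ ω, max (s b - S ω) 0 ∂μ :=
      integral_nonneg fun ω => le_max_right _ _
    have hI2nn : 0 ≤ ∫ ω, max (S ω - s b) 0 ∂μ :=
      integral_nonneg fun ω => le_max_right _ _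
    have hI1le : ∫ ω, max (s b - S ω) 0 ∂μ ≤ s b := by
      have hpt1 : (fun ω => max (s b - S ω) 0) ≤ fun _ => s b := fun ω =>
        max_le (by linarith [hSnn ω]) hs0
      have hIm := integral_mono int1 (integrable_const (s b)) hpt1
      simpa using hIm
    set y' : ℝ := max (Y b) (s b + 1 / b) with hy'def
    have hy'Y : Y b ≤ y' := le_max_left _ _
    have hb1b : 1 / b ≤ 1 := by
      rw [div_le_one hb0]; exact hb1
    have hy'le : y' ≤ Y b + 1 := max_le (by linarith) (by linarith)
    have hy'0 : 0 ≤ y' := le_trans hY0 hy'Y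
    have hmeasSet : MeasurableSet {ω | s b + 1 / b ≤ S ω} :=
      measurableSet_le measurable_const hSmeas
    have intMax : Integrable (fun ω => max (S ω - y') 0) μ :=
      (hSint.sub (integrable_const y')).pos_part
    have intInd : Integrable (Set.indicator {ω | s b + 1 / b ≤ S ω} fun _ => y') μ :=
      (integrable_const y').indicator hmeasSet
    have hpt2 : ∀ ω, max (S ω - s b) 0 ≤
        1 / b + max (S ω - y') 0 + Set.indicator {ω | s b + 1 / b ≤ S ω} (fun _ => y') ω := by
      intro ω
      by_cases hω : s b + 1 / b ≤ S ω
      · rw [Set.indicator_of_mem (show ω ∈ {ω | s b + 1 / b ≤ S ω} from hω)]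
        rcases le_total (S ω) y' with hc | hc
        · have hm : max (S ω - s b) 0 = S ω - s b := max_eq_left (by linarith)
          rw [hm]
          have := le_max_right (S ω - y') 0
          linarith
        · have hm1 : max (S ω - s b) 0 = S ω - s b := max_eq_left (by linarith)
          have hm2 : max (S ω - y') 0 = S ω - y' := max_eq_left (by linarith)
          rw [hm1, hm2]; linarith
      · rw [Set.indicator_of_notMem (show ω ∉ {ω | s b + 1 / b ≤ S ω} from hω)]
        push_neg at hω
        have hle : max (S ω - s b) 0 ≤ 1 / b := max_le (by linarith) hinvb.le
        have := le_max_right (S ω - y') 0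
        linarith
    have hI2a : ∫ ω, max (S ω - s b) 0 ∂μ ≤
        1 / b + (∫ ω, max (S ω - y') 0 ∂μ)
          + (μ {ω | s b + 1 / b ≤ S ω}).toReal * y' := by
      have intF : Integrable (fun ω => 1 / b + max (S ω - y') 0) μ := by
        exact (integrable_const (1 / b)).add intMax
      have intG : Integrable (fun ω => 1 / b + max (S ω - y') 0
          + Set.indicator {ω | s b + 1 / b ≤ S ω} (fun _ => y') ω) μ := by
        exact intF.add intInd
      have hmono := integral_mono int2 intG hpt2
      rwa [integral_add intF intInd,
        integral_add (integrable_const (1 / b)) intMax,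
        integral_const, integral_indicator_const _ hmeasSet, smul_eq_mul, smul_eq_mul,
        probReal_univ, one_mul] at hmono
    have hptExp : ∀ ω, max (S ω - y') 0 ≤ Real.exp (-(γ * y')) / γ * Real.exp (γ * S ω) := by
      intro ω
      have hrw : Real.exp (-(γ * y')) / γ * Real.exp (γ * S ω)
          = Real.exp (γ * (S ω - y')) / γ := by
        rw [div_mul_eq_mul_div, ← Real.exp_add]
        have : -(γ * y') + γ * S ω = γ * (S ω - y') := by ring
        rw [this]
      rw [hrw]
      apply max_le
      · rw [le_div_iff₀ hγ]
        have h1 := Real.add_one_le_exp (γ * (S ω - y'))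
        nlinarith
      · positivity
    have hExpInt : ∫ ω, max (S ω - y') 0 ∂μ ≤ h / ((h + b) * γ) := by
      have hintc : Integrable (fun ω => Real.exp (-(γ * y')) / γ * Real.exp (γ * S ω)) μ :=
        hexp.const_mul _
      calc ∫ ω, max (S ω - y') 0 ∂μ
          ≤ ∫ ω, Real.exp (-(γ * y')) / γ * Real.exp (γ * S ω) ∂μ :=
            integral_mono intMax hintc hptExp
      _ = Real.exp (-(γ * y')) / γ * M := integral_const_mul _ _
      _ ≤ Real.exp (-(γ * Y b)) / γ * M := by
            have hee : Real.exp (-(γ * y')) ≤ Real.exp (-(γ * Y b)) :=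
              Real.exp_le_exp.mpr (by nlinarith)
            gcongr
      _ = (h / (h + b)) / γ := by rw [div_mul_eq_mul_div, hexpY]
      _ = h / ((h + b) * γ) := by rw [div_div]
    -- combine
    have hT0 : 0 ≤ (μ {ω | s b + 1 / b ≤ S ω}).toReal := ENNReal.toReal_nonneg
    have hu0 : 0 ≤ ∫ ω, max (S ω - y') 0 ∂μ := integral_nonneg fun ω => le_max_right _ _
    have e1 : b * (h / ((h + b) * γ)) ≤ h / γ := by
      rw [mul_div_assoc', div_le_div_iff₀ (by positivity) hγ]
      nlinarith [mul_pos (mul_pos hh hh) hγ]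
    have e2 : b * (h / (h + b)) ≤ h := by
      rw [mul_div_assoc', div_le_iff₀ hhb]
      nlinarith [mul_pos hh hh]
    have hbI2 : b * ∫ ω, max (S ω - s b) 0 ∂μ ≤ 1 + h / γ + (Y b + 1) * h := by
      have c1 : b * ∫ ω, max (S ω - s b) 0 ∂μ
          ≤ b * (1 / b) + b * (∫ ω, max (S ω - y') 0 ∂μ)
            + b * ((μ {ω | s b + 1 / b ≤ S ω}).toReal * y') := by
        have := mul_le_mul_of_nonneg_left hI2a hb0.le
        linarith [this]
      have c2 : b * (1 / b) = 1 := by field_simp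
      have c3 : b * ∫ ω, max (S ω - y') 0 ∂μ ≤ h / γ :=
        le_trans (mul_le_mul_of_nonneg_left hExpInt hb0.le) e1
      have c4 : b * ((μ {ω | s b + 1 / b ≤ S ω}).toReal * y') ≤ (Y b + 1) * h := by
        have d1 : b * ((μ {ω | s b + 1 / b ≤ S ω}).toReal * y') ≤ b * (h / (h + b)) * y' := by
          have := mul_le_mul_of_nonneg_right
            (mul_le_mul_of_nonneg_left tail_eps hb0.le) hy'0
          calc b * ((μ {ω | s b + 1 / b ≤ S ω}).toReal * y')
              = b * (μ {ω | s b + 1 / b ≤ S ω}).toReal * y' := by ring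
          _ ≤ b * (h / (h + b)) * y' := this
        have d2 : b * (h / (h + b)) * y' ≤ h * y' :=
          mul_le_mul_of_nonneg_right e2 hy'0
        have d3 : h * y' ≤ h * (Y b + 1) := mul_le_mul_of_nonneg_left hy'le hh.le
        calc b * ((μ {ω | s b + 1 / b ≤ S ω}).toReal * y') ≤ h * y' := le_trans d1 d2
        _ ≤ h * (Y b + 1) := d3
        _ = (Y b + 1) * h := by ring
      linarith
    have hCrb := hC r b
    constructor
    · have hI1Y : h * ∫ ω, max (s b - S ω) 0 ∂μ ≤ h * Y b :=
        mul_le_mul_of_nonneg_left (le_trans hI1le hsY) hh.le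
      have hexpand : (Y b + 1) * h = Y b * h + h := by ring
      have hcomm : h * Y b = Y b * h := by ring
      rw [hCrb]
      linarith
    · rw [hCrb]
      have hz1 : 0 ≤ h * ∫ ω, max (s b - S ω) 0 ∂μ := mul_nonneg hh.le hI1nn
      have hz2 : 0 ≤ b * ∫ ω, max (S ω - s b) 0 ∂μ := mul_nonneg hb0.le hI2nn
      linarith
  -- log growth
  have logdiv : ∀ A B : ℝ, 0 < A →
      Tendsto (fun r : ℝ => Real.log (A * r + B) / r) atTop (nhds 0) := by
    intro A B hA
    have h1 : Tendsto (fun r : ℝ => A * r + B) atTop atTop :=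
      tendsto_atTop_add_const_right _ B (tendsto_id.const_mul_atTop hA)
    have h2 : (fun r : ℝ => Real.log (A * r + B)) =o[atTop] (fun r => A * r + B) :=
      Real.isLittleO_log_id_atTop.comp_tendsto h1
    have h3 : (fun r : ℝ => A * r + B) =O[atTop] (fun r : ℝ => r) := by
      apply Asymptotics.IsBigO.of_bound (|A| + |B|)
      filter_upwards [eventually_ge_atTop (1:ℝ)] with r hr
      have hr0 : (0:ℝ) < r := by linarith
      have habs : |r| = r := abs_of_pos hr0
      have h5 : |A * r + B| ≤ |A| * r + |B| := by
        calc |A * r + B| ≤ |A * r| + |B| := abs_add_le _ _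
        _ = |A| * r + |B| := by rw [abs_mul, habs]
      simp only [Real.norm_eq_abs]
      rw [habs]
      nlinarith [abs_nonneg A, abs_nonneg B]
    exact (h2.trans_isBigO h3).tendsto_div_nhds_zero
  have Ydiv : ∀ a c : ℝ, 0 < a →
      Tendsto (fun r : ℝ => Y (a * r + c) / r) atTop (nhds 0) := by
    intro a c ha
    have heq : ∀ r : ℝ, (Real.log ((M * a / h) * r + M * (h + c) / h) / r) / γ
        = Y (a * r + c) / r := by
      intro r
      have harg : (M * a / h) * r + M * (h + c) / h = M * (h + (a * r + c)) / h := by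
        field_simp; ring
      rw [hYb, harg]
      ring
    have := (logdiv (M * a / h) (M * (h + c) / h) (by positivity)).div_const γ
    rw [zero_div] at this
    exact this.congr heq
  -- main limit
  have main : ∀ a c : ℝ, 0 < a →
      Tendsto (fun r : ℝ => C r (a * r + c) / r) atTop (nhds μd) := by
    intro a c ha
    have hbtop : Tendsto (fun r : ℝ => a * r + c) atTop atTop :=
      tendsto_atTop_add_const_right _ c (tendsto_id.const_mul_atTop ha)
    have hb_ev : ∀ᶠ r : ℝ in atTop, 1 ≤ a * r + c := hbtop.eventually_ge_atTop 1
    have hlow : Tendsto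
        (fun r : ℝ => μd - (2 * h * (Y (a * r + c) / r) + (1 + h + h / γ) / r))
        atTop (nhds μd) := by
      have h1 := Ydiv a c ha
      have h2 : Tendsto (fun r : ℝ => (1 + h + h / γ) / r) atTop (nhds 0) :=
        tendsto_const_nhds.div_atTop tendsto_id
      have h3 : Tendsto
          (fun r : ℝ => μd - (2 * h * (Y (a * r + c) / r) + (1 + h + h / γ) / r))
          atTop (nhds (μd - (2 * h * 0 + 0))) :=
        Tendsto.sub tendsto_const_nhds ((h1.const_mul (2 * h)).add h2)
      simpa using h3
    apply tendsto_of_tendsto_of_tendsto_of_le_of_le' hlow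
      (tendsto_const_nhds : Tendsto (fun _ : ℝ => μd) atTop (nhds μd))
    · filter_upwards [hb_ev, eventually_gt_atTop (0:ℝ)] with r hr hr0
      have hk := (key r (a * r + c) hr).1
      have hdiv : (r * μd - (2 * h * Y (a * r + c) + (1 + h + h / γ))) / r
          ≤ C r (a * r + c) / r := by gcongr
      calc μd - (2 * h * (Y (a * r + c) / r) + (1 + h + h / γ) / r)
          = (r * μd - (2 * h * Y (a * r + c) + (1 + h + h / γ))) / r := by
            field_simp
      _ ≤ C r (a * r + c) / r := hdiv
    · filter_upwards [hb_ev, eventually_gt_atTop (0:ℝ)] with r hr hr0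
      have hk := (key r (a * r + c) hr).2
      calc C r (a * r + c) / r ≤ (r * μd) / r := by gcongr
      _ = μd := by field_simp
  have lim1 : Tendsto (fun r : ℝ => C r (r + τ * h) / r) atTop (nhds μd) := by
    have := main 1 (τ * h) one_pos
    exact this.congr fun r => by rw [one_mul]
  have lim2 : Tendsto (fun r : ℝ => C r ((1 - p) * r / (2 * (1 + τ))) / r)
      atTop (nhds μd) := by
    have h1 : (0:ℝ) < 1 - p := by linarith
    have h2 : (0:ℝ) < 2 * (1 + (τ:ℝ)) := by positivity
    have := main ((1 - p) / (2 * (1 + (τ:ℝ)))) 0 (div_pos h1 h2)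
    refine this.congr fun r => ?_
    have : (1 - p) / (2 * (1 + (τ:ℝ))) * r + 0 = (1 - p) * r / (2 * (1 + (τ:ℝ))) := by
      ring
    rw [this]
  have hfin := lim1.div lim2 (ne_of_gt hμd)
  rw [div_self (ne_of_gt hμd)] at hfin
  refine Tendsto.congr' ?_ hfin
  filter_upwards [eventually_ne_atTop (0:ℝ)] with r hr
  simp only [Pi.div_apply]
  rw [div_div_div_comm, div_self hr, div_one]
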